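/- The linear map Φ̃ : Λ²(M₂(ℤ)) → Λ' ⊂ Gross × Gross induced by (v₁, v₂) ↦ (2v₁·adj(v₂) − tr(v₁·adj(v₂))·I, 2·adj(v₂)·v₁ − tr(adj(v₂)·v₁)·I), expressed in suitable bases, has determinant ±2; equivalently its image is an index-2 sublattice of the product of two copies of the Gross lattice. -/

import Mathlib

open Matrix

/-- The pair of Klein vectors associated to a pair of matrices. -/
noncomputable def kleinPair (v₁ v₂ : Matrix (Fin 2) (Fin 2) ℤ) :
    Matrix (Fin 2) (Fin 2) ℤ × Matrix (Fin 2) (Fin 2) ℤ :=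
  (2 • (v₁ * Matrix.adjugate v₂) -
      Matrix.trace (v₁ * Matrix.adjugate v₂) • (1 : Matrix (Fin 2) (Fin 2) ℤ),
   2 • (Matrix.adjugate v₂ * v₁) -
      Matrix.trace (Matrix.adjugate v₂ * v₁) • (1 : Matrix (Fin 2) (Fin 2) ℤ))

/-- Membership in the Gross lattice: traceless with even off-diagonal entries. -/
def InGross (a : Matrix (Fin 2) (Fin 2) ℤ) : Prop :=
  Matrix.trace a = 0 ∧ 2 ∣ a 0 1 ∧ 2 ∣ a 1 0

lemma gross_of_part (m : Matrix (Fin 2) (Fin 2) ℤ) :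
    InGross (2 • m - Matrix.trace m • (1 : Matrix (Fin 2) (Fin 2) ℤ)) := by
  refine ⟨?_, ?_, ?_⟩
  · rw [Matrix.trace_sub, Matrix.trace_smul, Matrix.trace_smul, Matrix.trace_one]
    simp
    ring
  · rw [Matrix.sub_apply, Matrix.smul_apply, Matrix.smul_apply, Matrix.one_apply_ne (by decide)]
    simp
  · rw [Matrix.sub_apply, Matrix.smul_apply, Matrix.smul_apply, Matrix.one_apply_ne (by decide)]
    simp

lemma kleinPair_mem_aux (v₁ v₂ : Matrix (Fin 2) (Fin 2) ℤ) :
    InGross (kleinPair v₁ v₂).1 ∧ InGross (kleinPair v₁ v₂).2 ∧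
    ∀ i j, 2 ∣ ((kleinPair v₁ v₂).1 + (kleinPair v₁ v₂).2) i j := by
  refine ⟨gross_of_part _, gross_of_part _, fun i j => ?_⟩
  have h : (kleinPair v₁ v₂).1 + (kleinPair v₁ v₂).2 =
      2 • ((v₁ * Matrix.adjugate v₂ + Matrix.adjugate v₂ * v₁)
        - Matrix.trace (v₁ * Matrix.adjugate v₂) • (1 : Matrix (Fin 2) (Fin 2) ℤ)) := by
    simp only [kleinPair]
    rw [Matrix.trace_mul_comm (Matrix.adjugate v₂) v₁]
    module
  rw [h, Matrix.smul_apply]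
  simp

lemma kleinPair_e1 : kleinPair !![1,0;0,0] !![0,0;0,1] = (!![1,0;0,-1], !![1,0;0,-1]) := by
  refine Prod.ext ?_ ?_ <;>
    (ext i j; fin_cases i <;> fin_cases j <;>
      simp [kleinPair, Matrix.mul_apply, Fin.sum_univ_two, Matrix.adjugate_fin_two,
        Matrix.trace_fin_two, Matrix.one_apply])

lemma kleinPair_e2 : kleinPair !![0,1;0,0] !![0,0;1,0] = (!![-1,0;0,1], !![1,0;0,-1]) := by
  refine Prod.ext ?_ ?_ <;>
    (ext i j; fin_cases i <;> fin_cases j <;>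
      simp [kleinPair, Matrix.mul_apply, Fin.sum_univ_two, Matrix.adjugate_fin_two,
        Matrix.trace_fin_two, Matrix.one_apply])

lemma kleinPair_e3 : kleinPair !![0,1;0,0] !![1,0;0,0] = (!![0,2;0,0], 0) := by
  refine Prod.ext ?_ ?_ <;>
    (ext i j; fin_cases i <;> fin_cases j <;>
      simp [kleinPair, Matrix.mul_apply, Fin.sum_univ_two, Matrix.adjugate_fin_two,
        Matrix.trace_fin_two, Matrix.one_apply])

lemma kleinPair_e4 : kleinPair !![0,0;1,0] !![0,0;0,1] = (!![0,0;2,0], 0) := by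
  refine Prod.ext ?_ ?_ <;>
    (ext i j; fin_cases i <;> fin_cases j <;>
      simp [kleinPair, Matrix.mul_apply, Fin.sum_univ_two, Matrix.adjugate_fin_two,
        Matrix.trace_fin_two, Matrix.one_apply])

lemma kleinPair_e5 : kleinPair !![0,1;0,0] !![0,0;0,1] = (0, !![0,2;0,0]) := by
  refine Prod.ext ?_ ?_ <;>
    (ext i j; fin_cases i <;> fin_cases j <;>
      simp [kleinPair, Matrix.mul_apply, Fin.sum_univ_two, Matrix.adjugate_fin_two,
        Matrix.trace_fin_two, Matrix.one_apply])

lemma kleinPair_e6 : kleinPair !![0,0;1,0] !![1,0;0,0] = (0, !![0,0;2,0]) := by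
  refine Prod.ext ?_ ?_ <;>
    (ext i j; fin_cases i <;> fin_cases j <;>
      simp [kleinPair, Matrix.mul_apply, Fin.sum_univ_two, Matrix.adjugate_fin_two,
        Matrix.trace_fin_two, Matrix.one_apply])

lemma klein_decomp (a b : Matrix (Fin 2) (Fin 2) ℤ) (β γ ε ζ k : ℤ)
    (hβ : a 0 1 = 2*β) (hγ : a 1 0 = 2*γ) (hε : b 0 1 = 2*ε) (hζ : b 1 0 = 2*ζ)
    (hat : a 0 0 + a 1 1 = 0) (hbt : b 0 0 + b 1 1 = 0)
    (hk : a 0 0 + b 0 0 = 2*k) :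
    (a, b) =
        (a 0 0) • ((!![1,0;0,-1], !![1,0;0,-1]) :
          Matrix (Fin 2) (Fin 2) ℤ × Matrix (Fin 2) (Fin 2) ℤ)
        + (k - a 0 0) • (((!![1,0;0,-1], !![1,0;0,-1]) :
            Matrix (Fin 2) (Fin 2) ℤ × Matrix (Fin 2) (Fin 2) ℤ)
            + (!![-1,0;0,1], !![1,0;0,-1]))
        + β • ((!![0,2;0,0], 0) : Matrix (Fin 2) (Fin 2) ℤ × Matrix (Fin 2) (Fin 2) ℤ)
        + γ • ((!![0,0;2,0], 0) : Matrix (Fin 2) (Fin 2) ℤ × Matrix (Fin 2) (Fin 2) ℤ)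
        + ε • ((0, !![0,2;0,0]) : Matrix (Fin 2) (Fin 2) ℤ × Matrix (Fin 2) (Fin 2) ℤ)
        + ζ • ((0, !![0,0;2,0]) : Matrix (Fin 2) (Fin 2) ℤ × Matrix (Fin 2) (Fin 2) ℤ) := by
  refine Prod.ext ?_ ?_ <;>
    (ext i j; fin_cases i <;> fin_cases j <;>
      simp [Matrix.add_apply, Matrix.smul_apply, smul_eq_mul] <;> omega)


lemma pair_dvd (a b : Matrix (Fin 2) (Fin 2) ℤ)
    (h00 : 2 ∣ a 0 0 + b 0 0) (h01 : 2 ∣ a 0 1 + b 0 1)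
    (h10 : 2 ∣ a 1 0 + b 1 0) (h11 : 2 ∣ a 1 1 + b 1 1) :
    ∀ i j, 2 ∣ (a + b) i j := by
  intro i j
  rw [Matrix.add_apply]
  fin_cases i <;> fin_cases j <;> assumption

set_option maxHeartbeats 1000000 in
theorem klein_image_is_index_two_sublattice :
    let S : Submodule ℤ (Matrix (Fin 2) (Fin 2) ℤ × Matrix (Fin 2) (Fin 2) ℤ) :=
      Submodule.span ℤ
        (Set.range fun p : Matrix (Fin 2) (Fin 2) ℤ × Matrix (Fin 2) (Fin 2) ℤ =>
          kleinPair p.1 p.2)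
    -- the image is exactly Λ' = {(a₁,a₂) ∈ Λ×Λ : a₁ + a₂ ∈ 2·M₂(ℤ)}
    ((S : Set (Matrix (Fin 2) (Fin 2) ℤ × Matrix (Fin 2) (Fin 2) ℤ)) =
      {p | InGross p.1 ∧ InGross p.2 ∧ ∀ i j, 2 ∣ (p.1 + p.2) i j}) ∧
    -- and it has index two in Λ×Λ
    ∃ p₀, (InGross p₀.1 ∧ InGross p₀.2) ∧ p₀ ∉ S ∧
      ∀ p, InGross p.1 ∧ InGross p.2 → (p ∈ S ∨ p - p₀ ∈ S) := by
  intro S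
  have hmem : ∀ v₁ v₂, kleinPair v₁ v₂ ∈ S := fun v₁ v₂ =>
    Submodule.subset_span ⟨(v₁, v₂), rfl⟩
  have g1 : ((!![1,0;0,-1], !![1,0;0,-1]) :
      Matrix (Fin 2) (Fin 2) ℤ × Matrix (Fin 2) (Fin 2) ℤ) ∈ S := kleinPair_e1 ▸ hmem _ _
  have g2 : ((!![-1,0;0,1], !![1,0;0,-1]) :
      Matrix (Fin 2) (Fin 2) ℤ × Matrix (Fin 2) (Fin 2) ℤ) ∈ S := kleinPair_e2 ▸ hmem _ _
  have g3 : ((!![0,2;0,0], 0) :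
      Matrix (Fin 2) (Fin 2) ℤ × Matrix (Fin 2) (Fin 2) ℤ) ∈ S := kleinPair_e3 ▸ hmem _ _
  have g4 : ((!![0,0;2,0], 0) :
      Matrix (Fin 2) (Fin 2) ℤ × Matrix (Fin 2) (Fin 2) ℤ) ∈ S := kleinPair_e4 ▸ hmem _ _
  have g5 : ((0, !![0,2;0,0]) :
      Matrix (Fin 2) (Fin 2) ℤ × Matrix (Fin 2) (Fin 2) ℤ) ∈ S := kleinPair_e5 ▸ hmem _ _
  have g6 : ((0, !![0,0;2,0]) :
      Matrix (Fin 2) (Fin 2) ℤ × Matrix (Fin 2) (Fin 2) ℤ) ∈ S := kleinPair_e6 ▸ hmem _ _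
  -- key: everything in the target set is in S
  have key : ∀ a b : Matrix (Fin 2) (Fin 2) ℤ,
      InGross a → InGross b → (∀ i j, 2 ∣ (a + b) i j) → (a, b) ∈ S := by
    rintro a b ⟨hat, ⟨β, hβ⟩, ⟨γ, hγ⟩⟩ ⟨hbt, ⟨ε, hε⟩, ⟨ζ, hζ⟩⟩ hpar
    obtain ⟨k, hk⟩ := hpar 0 0
    rw [Matrix.add_apply] at hk
    rw [Matrix.trace_fin_two] at hat hbt
    rw [klein_decomp a b β γ ε ζ k hβ hγ hε hζ hat hbt hk]
    exact Submodule.add_mem _ (Submodule.add_mem _ (Submodule.add_mem _ (Submodule.add_mem _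
      (Submodule.add_mem _ (Submodule.smul_mem _ _ g1)
        (Submodule.smul_mem _ _ (Submodule.add_mem _ g1 g2)))
      (Submodule.smul_mem _ _ g3)) (Submodule.smul_mem _ _ g4))
      (Submodule.smul_mem _ _ g5)) (Submodule.smul_mem _ _ g6)
  have hSet : (S : Set (Matrix (Fin 2) (Fin 2) ℤ × Matrix (Fin 2) (Fin 2) ℤ)) =
      {p | InGross p.1 ∧ InGross p.2 ∧ ∀ i j, 2 ∣ (p.1 + p.2) i j} := by
    ext p
    constructor
    · intro hp
      refine Submodule.span_induction ?_ ?_ ?_ ?_ hp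
      · rintro _ ⟨⟨v₁, v₂⟩, rfl⟩
        exact kleinPair_mem_aux v₁ v₂
      · exact ⟨⟨by simp, by simp, by simp⟩, ⟨by simp, by simp, by simp⟩, by simp⟩
      · rintro ⟨x1, x2⟩ ⟨y1, y2⟩ - - ⟨⟨hx1, hx2, hx3⟩, ⟨hx4, hx5, hx6⟩, hx7⟩
          ⟨⟨hy1, hy2, hy3⟩, ⟨hy4, hy5, hy6⟩, hy7⟩
        refine ⟨⟨?_, ?_, ?_⟩, ⟨?_, ?_, ?_⟩, fun i j => ?_⟩
        · rw [show ((x1,x2) + (y1,y2)).1 = x1 + y1 from rfl, Matrix.trace_add, hx1, hy1,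
            add_zero]
        · rw [show ((x1,x2) + (y1,y2)).1 = x1 + y1 from rfl, Matrix.add_apply]
          exact dvd_add hx2 hy2
        · rw [show ((x1,x2) + (y1,y2)).1 = x1 + y1 from rfl, Matrix.add_apply]
          exact dvd_add hx3 hy3
        · rw [show ((x1,x2) + (y1,y2)).2 = x2 + y2 from rfl, Matrix.trace_add, hx4, hy4,
            add_zero]
        · rw [show ((x1,x2) + (y1,y2)).2 = x2 + y2 from rfl, Matrix.add_apply]
          exact dvd_add hx5 hy5
        · rw [show ((x1,x2) + (y1,y2)).2 = x2 + y2 from rfl, Matrix.add_apply]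
          exact dvd_add hx6 hy6
        · have h1 := hx7 i j
          have h2 := hy7 i j
          rw [Matrix.add_apply] at h1 h2
          rw [show ((x1,x2) + (y1,y2)).1 = x1 + y1 from rfl,
            show ((x1,x2) + (y1,y2)).2 = x2 + y2 from rfl, Matrix.add_apply,
            Matrix.add_apply, Matrix.add_apply]
          have := dvd_add h1 h2
          convert this using 1
          case e'_2 => rfl
          case e'_4 => ring
      · rintro c ⟨x1, x2⟩ - ⟨⟨hx1, hx2, hx3⟩, ⟨hx4, hx5, hx6⟩, hx7⟩
        refine ⟨⟨?_, ?_, ?_⟩, ⟨?_, ?_, ?_⟩, fun i j => ?_⟩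
        · rw [show (c • (x1,x2)).1 = c • x1 from rfl, Matrix.trace_smul, hx1, smul_zero]
        · rw [show (c • (x1,x2)).1 = c • x1 from rfl, Matrix.smul_apply, smul_eq_mul]
          exact Dvd.dvd.mul_left hx2 c
        · rw [show (c • (x1,x2)).1 = c • x1 from rfl, Matrix.smul_apply, smul_eq_mul]
          exact Dvd.dvd.mul_left hx3 c
        · rw [show (c • (x1,x2)).2 = c • x2 from rfl, Matrix.trace_smul, hx4, smul_zero]
        · rw [show (c • (x1,x2)).2 = c • x2 from rfl, Matrix.smul_apply, smul_eq_mul]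
          exact Dvd.dvd.mul_left hx5 c
        · rw [show (c • (x1,x2)).2 = c • x2 from rfl, Matrix.smul_apply, smul_eq_mul]
          exact Dvd.dvd.mul_left hx6 c
        · have h1 := hx7 i j
          rw [Matrix.add_apply] at h1
          rw [show (c • (x1,x2)).1 = c • x1 from rfl,
            show (c • (x1,x2)).2 = c • x2 from rfl, Matrix.add_apply, Matrix.smul_apply,
            Matrix.smul_apply, smul_eq_mul, smul_eq_mul]
          have := Dvd.dvd.mul_left h1 c
          convert this using 1
          case e'_2 => rfl
          case e'_4 => ring
    · rintro ⟨h1, h2, h3⟩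
      exact key p.1 p.2 h1 h2 h3
  refine ⟨hSet, (!![1,0;0,-1], 0), ⟨⟨?_, ?_, ?_⟩, ⟨?_, ?_, ?_⟩⟩, ?_, ?_⟩
  · simp [Matrix.trace_fin_two]
  · simp
  · simp
  · simp
  · simp
  · simp
  · intro hmem0
    have h0 : ((!![1,0;0,-1], 0) : Matrix (Fin 2) (Fin 2) ℤ × Matrix (Fin 2) (Fin 2) ℤ) ∈
        {p : Matrix (Fin 2) (Fin 2) ℤ × Matrix (Fin 2) (Fin 2) ℤ |
          InGross p.1 ∧ InGross p.2 ∧ ∀ i j, 2 ∣ (p.1 + p.2) i j} := hSet ▸ hmem0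
    obtain ⟨-, -, h3⟩ := h0
    have := h3 0 0
    rw [Matrix.add_apply] at this
    simp at this
  · rintro ⟨a, b⟩ ⟨⟨hat, ha2, ha3⟩, ⟨hbt, hb2, hb3⟩⟩
    rw [Matrix.trace_fin_two] at hat hbt
    dsimp only at hat ha2 ha3 hbt hb2 hb3
    by_cases hpar : 2 ∣ (a 0 0 + b 0 0)
    · left
      refine key a b ⟨by rw [Matrix.trace_fin_two]; omega, ha2, ha3⟩
        ⟨by rw [Matrix.trace_fin_two]; omega, hb2, hb3⟩
        (pair_dvd a b hpar (dvd_add ha2 hb2) (dvd_add ha3 hb3) ?_)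
      obtain ⟨k, hk⟩ := hpar
      exact ⟨-k, by omega⟩
    · right
      have hsub : ((a, b) : Matrix (Fin 2) (Fin 2) ℤ × Matrix (Fin 2) (Fin 2) ℤ)
          - (!![1,0;0,-1], 0) = (a - !![1,0;0,-1], b) := by
        rw [Prod.mk_sub_mk, sub_zero]
      rw [hsub]
      have hd00 : ((a - !![1,0;0,-1] : Matrix (Fin 2) (Fin 2) ℤ)) 0 0 = a 0 0 - 1 := by
        rw [Matrix.sub_apply]; norm_num
      have hd01 : ((a - !![1,0;0,-1] : Matrix (Fin 2) (Fin 2) ℤ)) 0 1 = a 0 1 := by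
        rw [Matrix.sub_apply]; norm_num
      have hd10 : ((a - !![1,0;0,-1] : Matrix (Fin 2) (Fin 2) ℤ)) 1 0 = a 1 0 := by
        rw [Matrix.sub_apply]; norm_num
      have hd11 : ((a - !![1,0;0,-1] : Matrix (Fin 2) (Fin 2) ℤ)) 1 1 = a 1 1 + 1 := by
        rw [Matrix.sub_apply]; norm_num
      refine key _ b ⟨by rw [Matrix.trace_fin_two, hd00, hd11]; omega,
        by rw [hd01]; exact ha2, by rw [hd10]; exact ha3⟩
        ⟨by rw [Matrix.trace_fin_two]; omega, hb2, hb3⟩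
        (pair_dvd _ b ?_ ?_ ?_ ?_)
      · rw [hd00]; omega
      · rw [hd01]; exact dvd_add ha2 hb2
      · rw [hd10]; exact dvd_add ha3 hb3
      · rw [hd11]
        have : ¬ 2 ∣ (a 1 1 + b 1 1) := by omega
        omega
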